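/- Controllability on the simplex interior for driftless graph flows: if the graph G is symmetric and strongly connected, then for any μ₀, μ₁ in the interior of the probability simplex P(V), there exist piecewise-continuous nonnegative control functions U_e(t) such that the solution of μ'(t) = Σ_{e=(v→w)} U_e(t) B_e μ(t) satisfies μ(0) = μ₀ and μ(1) = μ₁. -/

import Mathlib

open Finset

lemma exists_flow {m : ℕ} {ι : Type*} [Fintype ι] (src tgt : ι → Fin m)
    (a b : Fin m)
    (h : Relation.ReflTransGen (fun p q => ∃ e, src e = p ∧ tgt e = q) a b) :
    ∃ f : ι → ℝ, (∀ e, 0 ≤ f e) ∧ ∀ v,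
      ∑ e, f e * ((if tgt e = v then (1:ℝ) else 0) - (if src e = v then 1 else 0))
        = (if b = v then 1 else 0) - (if a = v then 1 else 0) := by
  classical
  induction h with
  | refl => exact ⟨0, fun e => le_refl 0, fun v => by simp⟩
  | @tail b c hab hbc ih =>
    obtain ⟨f, hf0, hfd⟩ := ih
    obtain ⟨e₀, he₀s, he₀t⟩ := hbc
    refine ⟨fun e => f e + if e = e₀ then 1 else 0, fun e => add_nonneg (hf0 e) (by split <;> norm_num), fun v => ?_⟩
    have key : ∑ e, (if e = e₀ then (1:ℝ) else 0) *
        ((if tgt e = v then (1:ℝ) else 0) - (if src e = v then 1 else 0))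
        = (if tgt e₀ = v then (1:ℝ) else 0) - (if src e₀ = v then 1 else 0) := by
      rw [Finset.sum_eq_single e₀]
      · simp
      · intro e _ he; simp [he]
      · simp
    calc ∑ e, (f e + if e = e₀ then (1:ℝ) else 0) *
          ((if tgt e = v then (1:ℝ) else 0) - (if src e = v then 1 else 0))
        = (∑ e, f e * ((if tgt e = v then (1:ℝ) else 0) - (if src e = v then 1 else 0)))
          + ∑ e, (if e = e₀ then (1:ℝ) else 0) *
            ((if tgt e = v then (1:ℝ) else 0) - (if src e = v then 1 else 0)) := by
          rw [← Finset.sum_add_distrib]; congr 1; ext e; ring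
      _ = ((if b = v then (1:ℝ) else 0) - (if a = v then 1 else 0))
          + ((if tgt e₀ = v then (1:ℝ) else 0) - (if src e₀ = v then 1 else 0)) := by
          rw [hfd v, key]
      _ = (if c = v then 1 else 0) - (if a = v then 1 else 0) := by
          rw [he₀s, he₀t]; ring

lemma exists_weights {m : ℕ} {ι : Type*} [Fintype ι] (src tgt : ι → Fin m)
    (hm : 0 < m)
    (hconn : ∀ v w : Fin m,
      Relation.ReflTransGen (fun p q => ∃ e, src e = p ∧ tgt e = q) v w)
    (d : Fin m → ℝ) (hd : ∑ v, d v = 0) :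
    ∃ w : ι → ℝ, (∀ e, 0 ≤ w e) ∧ ∀ u,
      ∑ e, w e * ((if tgt e = u then (1:ℝ) else 0) - (if src e = u then 1 else 0)) = d u := by
  classical
  set v0 : Fin m := ⟨0, hm⟩ with hv0
  choose F1 hF1 hD1 using fun v => exists_flow src tgt v0 v (hconn v0 v)
  choose F2 hF2 hD2 using fun v => exists_flow src tgt v v0 (hconn v v0)
  refine ⟨fun e => ∑ v, (if 0 ≤ d v then d v * F1 v e else (-d v) * F2 v e), ?_, ?_⟩
  · intro e
    apply Finset.sum_nonneg
    intro v _
    split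
    · exact mul_nonneg (by assumption) (hF1 v e)
    · exact mul_nonneg (by linarith [lt_of_not_ge (by assumption)]) (hF2 v e)
  · intro u
    have swap : ∑ e, (∑ v, (if 0 ≤ d v then d v * F1 v e else (-d v) * F2 v e)) *
          ((if tgt e = u then (1:ℝ) else 0) - (if src e = u then 1 else 0))
        = ∑ v, ∑ e, (if 0 ≤ d v then d v * F1 v e else (-d v) * F2 v e) *
          ((if tgt e = u then (1:ℝ) else 0) - (if src e = u then 1 else 0)) := by
      rw [Finset.sum_comm]
      congr 1; ext e
      rw [Finset.sum_mul]
    rw [swap]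
    have term : ∀ v, ∑ e, (if 0 ≤ d v then d v * F1 v e else (-d v) * F2 v e) *
          ((if tgt e = u then (1:ℝ) else 0) - (if src e = u then 1 else 0))
        = d v * ((if v = u then (1:ℝ) else 0) - (if v0 = u then 1 else 0)) := by
      intro v
      by_cases hv : 0 ≤ d v
      · simp only [hv, if_true, mul_assoc]
        rw [← Finset.mul_sum, hD1 v u]
      · simp only [hv, if_false, mul_assoc]
        rw [← Finset.mul_sum, hD2 v u]
        ring
    rw [Finset.sum_congr rfl (fun v _ => term v)]
    have : ∑ v, d v * ((if v = u then (1:ℝ) else 0) - (if v0 = u then 1 else 0))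
        = (∑ v, d v * (if v = u then (1:ℝ) else 0)) - (∑ v, d v) * (if v0 = u then 1 else 0) := by
      rw [Finset.sum_mul, ← Finset.sum_sub_distrib]
      congr 1; ext v; ring
    rw [this, hd]
    simp [mul_ite]


/-- Controllability on the simplex interior for driftless graph flows:
for a symmetric strongly connected graph and any `μ₀, μ₁` in the interior of the probability
simplex, there exist piecewise-continuous nonnegative controls `U_e(t)` such that the solution
of `μ'(t) = Σ_e U_e(t) B_e μ(t)` satisfies `μ(0) = μ₀` and `μ(1) = μ₁`. -/
theorem driftless_graph_controllability
    (m : ℕ) (hm : 2 ≤ m) (ι : Type*) [Fintype ι]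
    (src tgt : ι → Fin m) (hst : ∀ e, src e ≠ tgt e)
    (hsymm : ∀ e : ι, ∃ e' : ι, src e' = tgt e ∧ tgt e' = src e)
    (hconn : ∀ v w : Fin m,
      Relation.ReflTransGen (fun p q => ∃ e, src e = p ∧ tgt e = q) v w)
    (B : ι → Matrix (Fin m) (Fin m) ℝ)
    (hB : ∀ e p q, B e p q =
      if p = src e ∧ q = src e then -1 else if p = tgt e ∧ q = src e then 1 else 0)
    (μ₀ μ₁ : Fin m → ℝ)
    (h₀pos : ∀ v, 0 < μ₀ v) (h₀sum : ∑ v, μ₀ v = 1)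
    (h₁pos : ∀ v, 0 < μ₁ v) (h₁sum : ∑ v, μ₁ v = 1) :
    ∃ (U : ι → ℝ → ℝ) (μ : ℝ → Fin m → ℝ),
      (∀ e t, 0 ≤ U e t) ∧
      -- piecewise continuity: continuous off a finite set of breakpoints
      (∃ s : Finset ℝ, ∀ e, ContinuousOn (U e) (Set.Icc (0 : ℝ) 1 \ (s : Set ℝ))) ∧
      μ 0 = μ₀ ∧ μ 1 = μ₁ ∧
      (∀ t ∈ Set.Icc (0 : ℝ) 1,
        HasDerivAt μ (∑ e, U e t • (B e).mulVec (μ t)) t) := by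
  classical
  obtain ⟨w, hw0, hwd⟩ := exists_weights src tgt (by omega) hconn
    (fun v => μ₁ v - μ₀ v) (by rw [Finset.sum_sub_distrib, h₀sum, h₁sum]; ring)
  set c : ℝ → ℝ := fun t => max 0 (min 1 t) with hc
  have hc0 : ∀ t, 0 ≤ c t := fun t => le_max_left _ _
  have hc1 : ∀ t, c t ≤ 1 := fun t => max_le (by norm_num) (min_le_left _ _)
  have pden : ∀ (e : ι) (t : ℝ), 0 < (1 - c t) * μ₀ (src e) + c t * μ₁ (src e) := by
    intro e t
    rcases lt_or_ge (c t) 1 with h | h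
    · have h1 : 0 < (1 - c t) * μ₀ (src e) := mul_pos (by linarith) (h₀pos _)
      have h2 : 0 ≤ c t * μ₁ (src e) := mul_nonneg (hc0 t) (h₁pos _).le
      linarith
    · have hceq : c t = 1 := le_antisymm (hc1 t) h
      rw [hceq]; simpa using h₁pos (src e)
  refine ⟨fun e t => w e / ((1 - c t) * μ₀ (src e) + c t * μ₁ (src e)),
    fun t v => (1 - t) * μ₀ v + t * μ₁ v, ?_, ⟨∅, ?_⟩, ?_, ?_, ?_⟩
  · exact fun e t => div_nonneg (hw0 e) (pden e t).le
  · intro e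
    have hcc : Continuous c := by
      rw [hc]; exact continuous_const.max (continuous_const.min continuous_id)
    have hden : Continuous fun t => (1 - c t) * μ₀ (src e) + c t * μ₁ (src e) :=
      ((continuous_const.sub hcc).mul continuous_const).add (hcc.mul continuous_const)
    exact (Continuous.div continuous_const hden (fun t => (pden e t).ne')).continuousOn
  · funext v; simp
  · funext v; simp
  · intro t ht
    have hct : c t = t := by
      rw [hc]; simp only
      rw [min_eq_right ht.2, max_eq_right ht.1]
    have hBv : ∀ (e : ι) (x : Fin m → ℝ) (v : Fin m), (B e).mulVec x v =
        ((if tgt e = v then (1:ℝ) else 0) - (if src e = v then 1 else 0)) * x (src e) := by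
      intro e x v
      simp only [Matrix.mulVec, dotProduct]
      rw [Finset.sum_eq_single (src e)]
      · congr 1
        rw [hB]
        have h3 := hst e
        rcases eq_or_ne v (src e) with h1 | h1
        · subst h1
          simp [h3, Ne.symm h3]
        · rcases eq_or_ne v (tgt e) with h2 | h2
          · subst h2
            simp [h1, h3, Ne.symm h3]
          · simp [h1, h2, Ne.symm h1, Ne.symm h2]
      · intro q _ hq
        rw [hB]
        simp [hq]
      · simp
    have hsum_eq : ∀ v, (∑ e, (w e / ((1 - c t) * μ₀ (src e) + c t * μ₁ (src e))) •
        (B e).mulVec (fun v => (1 - t) * μ₀ v + t * μ₁ v)) v = μ₁ v - μ₀ v := by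
      intro v
      rw [Finset.sum_apply]
      have : ∀ e : ι, ((w e / ((1 - c t) * μ₀ (src e) + c t * μ₁ (src e))) •
          (B e).mulVec (fun v => (1 - t) * μ₀ v + t * μ₁ v)) v =
          w e * ((if tgt e = v then (1:ℝ) else 0) - (if src e = v then 1 else 0)) := by
        intro e
        rw [Pi.smul_apply, smul_eq_mul, hBv, hct]
        rw [show w e / ((1 - t) * μ₀ (src e) + t * μ₁ (src e)) *
            (((if tgt e = v then (1:ℝ) else 0) - (if src e = v then 1 else 0)) *
              ((1 - t) * μ₀ (src e) + t * μ₁ (src e))) =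
            w e / ((1 - t) * μ₀ (src e) + t * μ₁ (src e)) *
              ((1 - t) * μ₀ (src e) + t * μ₁ (src e)) *
              ((if tgt e = v then (1:ℝ) else 0) - (if src e = v then 1 else 0)) from by ring]
        rw [div_mul_cancel₀]
        rw [← hct]
        exact (pden e t).ne'
      rw [Finset.sum_congr rfl (fun e _ => this e)]
      exact hwd v
    rw [hasDerivAt_pi]
    intro v
    have hd : HasDerivAt (fun t : ℝ => (1 - t) * μ₀ v + t * μ₁ v)
        ((-1) * μ₀ v + 1 * μ₁ v) t :=
      (((hasDerivAt_id t).const_sub 1).mul_const _).add ((hasDerivAt_id t).mul_const _)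
    rw [hsum_eq v]; exact hd.congr_deriv (by ring)
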